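/- arXiv:1308.3388 — 2 statements merged into one kernel-verified Lean document; each statement's English description precedes it below -/
import Mathlib

section
/- In the ILT model, for t > 0 the average degree of G_t equals (3/2)^t · (vol(G_0)/n_0 + 2) − 2. -/
open SimpleGraph Finset

universe u
variable {V : Type u}

/-- One step of the Iterated Local Transitivity model: every vertex `x` gets a
clone `Sum.inr x` joined to `x` and all of its neighbours; old vertices are `Sum.inl`. -/
def ILTstep (G : SimpleGraph V) : SimpleGraph (V ⊕ V) where
  Adj a b := match a, b with
    | Sum.inl x, Sum.inl y => G.Adj x y
    | Sum.inl x, Sum.inr y => x = y ∨ G.Adj x y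
    | Sum.inr x, Sum.inl y => x = y ∨ G.Adj x y
    | Sum.inr _, Sum.inr _ => False
  symm := by
    refine ⟨?_⟩
    rintro (x | x) (y | y) h
    · exact G.adj_symm h
    · exact h.imp Eq.symm (fun hh => G.adj_symm hh)
    · exact h.imp Eq.symm (fun hh => G.adj_symm hh)
    · exact h.elim
  loopless := by
    refine ⟨?_⟩
    rintro (x | x) h
    · exact G.irrefl h
    · exact h

instance ILTstepDecAdj (G : SimpleGraph V) [DecidableEq V] [DecidableRel G.Adj] :
    DecidableRel (ILTstep G).Adj := fun a b =>
  match a, b with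
  | Sum.inl x, Sum.inl y => inferInstanceAs (Decidable (G.Adj x y))
  | Sum.inl x, Sum.inr y => inferInstanceAs (Decidable (x = y ∨ G.Adj x y))
  | Sum.inr x, Sum.inl y => inferInstanceAs (Decidable (x = y ∨ G.Adj x y))
  | Sum.inr _, Sum.inr _ => inferInstanceAs (Decidable False)

/-- The vertex set of the ILT model at time `t`. -/
def ILTV (V : Type u) : ℕ → Type u
  | 0 => V
  | t + 1 => ILTV V t ⊕ ILTV V t

/-- The graph of the ILT model at time `t`, starting from `G`. -/
def ILTG (G : SimpleGraph V) : (t : ℕ) → SimpleGraph (ILTV V t)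
  | 0 => G
  | t + 1 => ILTstep (ILTG G t)

instance ILTVFintype [Fintype V] : ∀ t, Fintype (ILTV V t)
  | 0 => inferInstanceAs (Fintype V)
  | t + 1 => letI := ILTVFintype t
             inferInstanceAs (Fintype (ILTV V t ⊕ ILTV V t))

instance ILTVDecEq [DecidableEq V] : ∀ t, DecidableEq (ILTV V t)
  | 0 => inferInstanceAs (DecidableEq V)
  | t + 1 => letI := ILTVDecEq t
             inferInstanceAs (DecidableEq (ILTV V t ⊕ ILTV V t))

instance ILTGDecAdj (G : SimpleGraph V) [DecidableEq V] [DecidableRel G.Adj] :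
    ∀ t, DecidableRel (ILTG G t).Adj
  | 0 => inferInstanceAs (DecidableRel G.Adj)
  | t + 1 => letI : DecidableEq (ILTV V t) := ILTVDecEq t
             letI : DecidableRel (ILTG G t).Adj := ILTGDecAdj G t
             ILTstepDecAdj (ILTG G t)

/-- The volume of a graph: the sum of the degrees of its vertices. -/
def graphVol [Fintype V] (G : SimpleGraph V) [DecidableRel G.Adj] : ℕ :=
  ∑ v, G.degree v

/-- The Wiener index: the sum of distances over unordered pairs of vertices. -/
noncomputable def wienerIndex [Fintype V] (G : SimpleGraph V) : ℕ :=
  (∑ x : V, ∑ y : V, G.dist x y) / 2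

lemma vol_ILTstep [Fintype V] [DecidableEq V] (G : SimpleGraph V) [DecidableRel G.Adj] :
    graphVol (ILTstep G) = 3 * graphVol G + 2 * Fintype.card V := by
  have key : ∀ {α : Type u} [Fintype α] (H : SimpleGraph α) [DecidableRel H.Adj],
      graphVol H = ∑ v, ∑ w, if H.Adj v w then 1 else 0 := by
    intro α _ H _
    unfold graphVol
    congr 1; funext v
    rw [← SimpleGraph.card_neighborFinset_eq_degree, SimpleGraph.neighborFinset_eq_filter,
      Finset.card_filter]
  have hmix : ∀ x : V, (∑ y : V, if x = y ∨ G.Adj x y then 1 else 0)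
      = 1 + ∑ y : V, if G.Adj x y then 1 else 0 := by
    intro x
    have : ∀ y : V, (if x = y ∨ G.Adj x y then (1:ℕ) else 0)
        = (if x = y then 1 else 0) + (if G.Adj x y then 1 else 0) := by
      intro y
      by_cases h1 : x = y
      · subst h1; simp [G.irrefl]
      · by_cases h2 : G.Adj x y <;> simp [h1, h2]
    rw [Finset.sum_congr rfl (fun y _ => this y), Finset.sum_add_distrib,
      Finset.sum_ite_eq Finset.univ x (fun _ => (1:ℕ)), if_pos (Finset.mem_univ x)]
  rw [key, key]
  rw [Fintype.sum_sum_type]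
  have hAdj1 : ∀ x y : V, (ILTstep G).Adj (Sum.inl x) (Sum.inl y) ↔ G.Adj x y := fun _ _ => Iff.rfl
  have hAdj2 : ∀ x y : V, (ILTstep G).Adj (Sum.inl x) (Sum.inr y) ↔ x = y ∨ G.Adj x y :=
    fun _ _ => Iff.rfl
  have hAdj3 : ∀ x y : V, (ILTstep G).Adj (Sum.inr x) (Sum.inl y) ↔ x = y ∨ G.Adj x y :=
    fun _ _ => Iff.rfl
  have hAdj4 : ∀ x y : V, ¬ (ILTstep G).Adj (Sum.inr x) (Sum.inr y) := fun _ _ h => h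
  simp only [Fintype.sum_sum_type, hAdj1, hAdj2, hAdj3, hAdj4, if_false, if_neg (hAdj4 _ _),
    Finset.sum_const_zero, add_zero]
  simp only [hmix, Finset.sum_add_distrib, ← Finset.sum_mul, Finset.sum_const,
    Finset.card_univ, smul_eq_mul, mul_one]
  ring

lemma ILTV_nonempty [Nonempty V] : ∀ t, Nonempty (ILTV V t)
  | 0 => inferInstanceAs (Nonempty V)
  | t + 1 => (ILTV_nonempty t).elim fun x => ⟨Sum.inl x⟩

lemma ILT_average_degree_aux [Fintype V] [DecidableEq V] [Nonempty V]
    (G : SimpleGraph V) [DecidableRel G.Adj] : ∀ t : ℕ,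
    (graphVol (ILTG G t) : ℚ) / (Fintype.card (ILTV V t))
      = (3 / 2) ^ t * ((graphVol G : ℚ) / (Fintype.card V) + 2) - 2
  | 0 => by simp [ILTG, ILTV]; rfl
  | t + 1 => by
    have ih := ILT_average_degree_aux G t
    haveI := ILTV_nonempty (V := V) t
    have hn : (0 : ℚ) < (Fintype.card (ILTV V t) : ℚ) := by
      exact_mod_cast Fintype.card_pos
    have hcard : Fintype.card (ILTV V (t + 1)) = 2 * Fintype.card (ILTV V t) := by
      show Fintype.card (ILTV V t ⊕ ILTV V t) = _
      rw [Fintype.card_sum]; ring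
    have hvol : graphVol (ILTG G (t + 1))
        = 3 * graphVol (ILTG G t) + 2 * Fintype.card (ILTV V t) := by
      letI := ILTVDecEq (V := V) t
      exact vol_ILTstep (ILTG G t)
    rw [hvol, hcard]
    push_cast
    rw [div_eq_iff (by positivity), pow_succ]
    have : (graphVol (ILTG G t) : ℚ)
        = ((3 / 2) ^ t * ((graphVol G : ℚ) / (Fintype.card V) + 2) - 2)
          * (Fintype.card (ILTV V t) : ℚ) := by
      rw [← ih, div_mul_cancel₀ _ hn.ne']
    rw [this]; ring

theorem ILT_average_degree [Fintype V] [DecidableEq V] [Nonempty V]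
    (G : SimpleGraph V) [DecidableRel G.Adj] (t : ℕ) (ht : 0 < t) :
    (graphVol (ILTG G t) : ℚ) / (Fintype.card (ILTV V t))
      = (3 / 2) ^ t * ((graphVol G : ℚ) / (Fintype.card V) + 2) - 2 := by
  exact ILT_average_degree_aux G t
end

section
/- In the ILT model, the Wiener index satisfies the recurrence W(G_{t+1}) = 4·W(G_t) + e_t + n_t, where e_t and n_t are the numbers of edges and nodes of G_t. -/
open SimpleGraph Finset

universe u
variable {V : Type u}

namespace ILTaux
open SimpleGraph Finset

variable {V : Type u} (G : SimpleGraph V)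

/-- The embedding of the old graph into the ILT step. -/
def inlHom : G →g ILTstep G where
  toFun := Sum.inl
  map_rel' := fun h => h

/-- Projection collapsing clones onto originals. -/
def proj : V ⊕ V → V := Sum.elim id id

lemma adj_proj {a b : V ⊕ V} (h : (ILTstep G).Adj a b) :
    proj a = proj b ∨ G.Adj (proj a) (proj b) := by
  rcases a with x | x <;> rcases b with y | y <;>
    simp only [proj, Sum.elim_inl, Sum.elim_inr, id_eq]
  · exact Or.inr h
  · exact h
  · exact h
  · exact h.elim

lemma dist_le_walk_length (hG : G.Connected) {a b : V ⊕ V}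
    (p : (ILTstep G).Walk a b) : G.dist (proj a) (proj b) ≤ p.length := by
  induction p with
  | nil => simp
  | @cons u v w h q ih =>
    rw [SimpleGraph.Walk.length_cons]
    rcases adj_proj G h with he | ha
    · rw [he]; omega
    · have h1 : G.dist (proj u) (proj v) = 1 := SimpleGraph.dist_eq_one_iff_adj.mpr ha
      have := hG.dist_triangle (u := proj u) (v := proj v) (w := proj w)
      omega

lemma ILTstep_connected (hG : G.Connected) : (ILTstep G).Connected := by
  have hr : ∀ x : V, (ILTstep G).Reachable (Sum.inr x) (Sum.inl x) := fun x =>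
    (SimpleGraph.Adj.reachable (Or.inl rfl : (ILTstep G).Adj (Sum.inr x) (Sum.inl x)))
  have hl : ∀ x y : V, (ILTstep G).Reachable (Sum.inl x) (Sum.inl y) := fun x y =>
    (hG.preconnected x y).map (inlHom G)
  haveI : Nonempty (V ⊕ V) := ⟨Sum.inl hG.nonempty.some⟩
  refine SimpleGraph.Connected.mk ?_
  intro a b
  rcases a with x | x <;> rcases b with y | y
  · exact hl x y
  · exact (hl x y).trans (hr y).symm
  · exact (hr x).trans (hl x y)
  · exact ((hr x).trans (hl x y)).trans (hr y).symm

lemma walk_inr_inl (hG : G.Connected) {x y : V} (hxy : x ≠ y) :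
    ∃ p : (ILTstep G).Walk (Sum.inr x) (Sum.inl y), p.length = G.dist x y := by
  obtain ⟨q, hq⟩ := hG.exists_walk_length_eq_dist x y
  cases q with
  | nil => exact absurd rfl hxy
  | @cons _ z _ h r =>
    have hxz : (ILTstep G).Adj (Sum.inr x) (Sum.inl z) := Or.inr h
    refine ⟨SimpleGraph.Walk.cons hxz (r.map (inlHom G)), ?_⟩
    show (r.map (inlHom G)).length + 1 = G.dist x y
    rw [SimpleGraph.Walk.length_map]
    simpa using hq

lemma dist_ll (hG : G.Connected) (x y : V) :
    (ILTstep G).dist (Sum.inl x) (Sum.inl y) = G.dist x y := by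
  refine le_antisymm ?_ ?_
  · obtain ⟨q, hq⟩ := hG.exists_walk_length_eq_dist x y
    calc (ILTstep G).dist (Sum.inl x) (Sum.inl y) ≤ (q.map (inlHom G)).length :=
          SimpleGraph.dist_le _
      _ = G.dist x y := by rw [SimpleGraph.Walk.length_map]; exact hq
  · obtain ⟨q, hq⟩ := (ILTstep_connected G hG).exists_walk_length_eq_dist
      (Sum.inl x) (Sum.inl y)
    have := dist_le_walk_length G hG q
    simpa [proj, hq] using this

lemma dist_rl (hG : G.Connected) {x y : V} (hxy : x ≠ y) :
    (ILTstep G).dist (Sum.inr x) (Sum.inl y) = G.dist x y := by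
  refine le_antisymm ?_ ?_
  · obtain ⟨p, hp⟩ := walk_inr_inl G hG hxy
    calc (ILTstep G).dist (Sum.inr x) (Sum.inl y) ≤ p.length := SimpleGraph.dist_le _
      _ = G.dist x y := hp
  · obtain ⟨q, hq⟩ := (ILTstep_connected G hG).exists_walk_length_eq_dist
      (Sum.inr x) (Sum.inl y)
    have := dist_le_walk_length G hG q
    simpa [proj, hq] using this

lemma dist_rl_self (hG : G.Connected) (x : V) :
    (ILTstep G).dist (Sum.inr x) (Sum.inl x) = 1 :=
  SimpleGraph.dist_eq_one_iff_adj.mpr (Or.inl rfl)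

lemma dist_rl' [DecidableEq V] (hG : G.Connected) (x y : V) :
    (ILTstep G).dist (Sum.inr x) (Sum.inl y) = G.dist x y + if x = y then 1 else 0 := by
  by_cases h : x = y
  · subst h; simp [dist_rl_self G hG]
  · simp [h, dist_rl G hG h]

lemma dist_lr' [DecidableEq V] (hG : G.Connected) (x y : V) :
    (ILTstep G).dist (Sum.inl x) (Sum.inr y) = G.dist x y + if x = y then 1 else 0 := by
  rw [SimpleGraph.dist_comm, dist_rl' G hG, SimpleGraph.dist_comm]
  by_cases h : x = y
  · subst h; simp
  · simp [h, Ne.symm h]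

lemma dist_rr' [DecidableRel G.Adj] (hG : G.Connected) (x y : V) :
    (ILTstep G).dist (Sum.inr x) (Sum.inr y)
      = G.dist x y + if G.Adj x y then 1 else 0 := by
  by_cases hxy : x = y
  · subst hxy; simp [SimpleGraph.dist_self, G.irrefl]
  by_cases hadj : G.Adj x y
  · -- distance is 2
    have hd1 : G.dist x y = 1 := SimpleGraph.dist_eq_one_iff_adj.mpr hadj
    have hub : (ILTstep G).dist (Sum.inr x) (Sum.inr y) ≤ 2 := by
      have a1 : (ILTstep G).Adj (Sum.inr x) (Sum.inl y) := Or.inr hadj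
      have a2 : (ILTstep G).Adj (Sum.inl y) (Sum.inr y) := Or.inl rfl
      calc (ILTstep G).dist (Sum.inr x) (Sum.inr y)
          ≤ (SimpleGraph.Walk.cons a1
              (SimpleGraph.Walk.cons a2 SimpleGraph.Walk.nil)).length :=
            SimpleGraph.dist_le _
        _ = 2 := rfl
    have hne : (Sum.inr x : V ⊕ V) ≠ Sum.inr y := fun h => hxy (Sum.inr.inj h)
    have hpos : 0 < (ILTstep G).dist (Sum.inr x) (Sum.inr y) :=
      (ILTstep_connected G hG).pos_dist_of_ne hne
    have hne1 : (ILTstep G).dist (Sum.inr x) (Sum.inr y) ≠ 1 := by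
      intro h
      exact (SimpleGraph.dist_eq_one_iff_adj.mp h : False)
    simp only [hadj, if_pos, hd1]
    omega
  · -- distance equals G.dist x y
    simp only [hadj, if_neg, not_false_iff, add_zero]
    refine le_antisymm ?_ ?_
    · obtain ⟨q, hq⟩ := hG.exists_walk_length_eq_dist x y
      cases q with
      | nil => exact absurd rfl hxy
      | @cons _ z _ h r =>
        have hzy : z ≠ y := by rintro rfl; exact hadj h
        obtain ⟨p, hp⟩ := walk_inr_inl G hG (Ne.symm hzy)
        have hdist : G.dist y z ≤ r.length := by
          rw [SimpleGraph.dist_comm]; exact SimpleGraph.dist_le r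
        have hxz : (ILTstep G).Adj (Sum.inr x) (Sum.inl z) := Or.inr h
        calc (ILTstep G).dist (Sum.inr x) (Sum.inr y)
            ≤ (SimpleGraph.Walk.cons hxz p.reverse).length := SimpleGraph.dist_le _
          _ = p.length + 1 := by
              simp [SimpleGraph.Walk.length_cons, SimpleGraph.Walk.length_reverse]
          _ ≤ r.length + 1 := by rw [hp]; omega
          _ = G.dist x y := by rw [← hq]; simp [SimpleGraph.Walk.length_cons]
    · obtain ⟨q, hq⟩ := (ILTstep_connected G hG).exists_walk_length_eq_dist
        (Sum.inr x) (Sum.inr y)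
      have := dist_le_walk_length G hG q
      simpa [proj, hq] using this

lemma even_sum_dist [Fintype V] [DecidableEq V] (G : SimpleGraph V) :
    Even (∑ x : V, ∑ y : V, G.dist x y) := by
  rw [Nat.even_iff, ← Nat.dvd_iff_mod_eq_zero,
    ← ZMod.natCast_eq_zero_iff]
  push_cast
  rw [← Finset.sum_product']
  refine Finset.sum_ninvolution (fun a => (a.2, a.1)) ?_ ?_ ?_ ?_
  · intro a
    show ((G.dist a.1 a.2 : ℕ) : ZMod 2) + ((G.dist a.2 a.1 : ℕ) : ZMod 2) = 0
    rw [SimpleGraph.dist_comm]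
    exact CharTwo.add_self_eq_zero _
  · intro a ha h
    apply ha
    have : a.2 = a.1 := congrArg Prod.fst h
    show ((G.dist a.1 a.2 : ℕ) : ZMod 2) = 0
    rw [this]
    simp [SimpleGraph.dist_self]
  · intro a
    exact Finset.mem_product.2 ⟨Finset.mem_univ _, Finset.mem_univ _⟩
  · intro a; rfl

end ILTaux

theorem ILT_wiener_recurrence [Fintype V] [DecidableEq V]
    (G : SimpleGraph V) [DecidableRel G.Adj] (hG : G.Connected) :
    wienerIndex (ILTstep G) = 4 * wienerIndex G + G.edgeFinset.card + Fintype.card V := by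
  classical
  have key : ∑ a : V ⊕ V, ∑ b : V ⊕ V, (ILTstep G).dist a b
      = 4 * (∑ x : V, ∑ y : V, G.dist x y) + 2 * Fintype.card V
        + 2 * G.edgeFinset.card := by
    rw [Fintype.sum_sum_type]
    have hinner : ∀ a : V ⊕ V, ∑ b : V ⊕ V, (ILTstep G).dist a b
        = ∑ y : V, (ILTstep G).dist a (Sum.inl y)
          + ∑ y : V, (ILTstep G).dist a (Sum.inr y) := fun a =>
      Fintype.sum_sum_type _
    simp only [hinner]
    have h1 : ∀ x : V, ∑ y : V, (ILTstep G).dist (Sum.inl x) (Sum.inl y)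
        = ∑ y : V, G.dist x y := fun x => by
      simp only [ILTaux.dist_ll G hG]
    have h2 : ∀ x : V, ∑ y : V, (ILTstep G).dist (Sum.inl x) (Sum.inr y)
        = (∑ y : V, G.dist x y) + 1 := fun x => by
      simp only [ILTaux.dist_lr' G hG]
      rw [Finset.sum_add_distrib, Finset.sum_ite_eq Finset.univ x (fun _ => 1)]
      simp
    have h3 : ∀ x : V, ∑ y : V, (ILTstep G).dist (Sum.inr x) (Sum.inl y)
        = (∑ y : V, G.dist x y) + 1 := fun x => by
      simp only [ILTaux.dist_rl' G hG]
      rw [Finset.sum_add_distrib, Finset.sum_ite_eq Finset.univ x (fun _ => 1)]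
      simp
    have h4 : ∀ x : V, ∑ y : V, (ILTstep G).dist (Sum.inr x) (Sum.inr y)
        = (∑ y : V, G.dist x y) + G.degree x := fun x => by
      simp only [ILTaux.dist_rr' G hG]
      rw [Finset.sum_add_distrib]
      congr 1
      rw [Finset.sum_boole]
      simp [SimpleGraph.degree, SimpleGraph.neighborFinset_eq_filter]
    simp only [h1, h2, h3, h4, Finset.sum_add_distrib, Finset.sum_const,
      Finset.card_univ, smul_eq_mul, mul_one]
    rw [G.sum_degrees_eq_twice_card_edges]
    ring
  obtain ⟨k, hk⟩ := ILTaux.even_sum_dist G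
  unfold wienerIndex
  rw [key, hk]
  omega
end
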